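/- arXiv:q-alg/9711009 — 2 statements merged into one kernel-verified Lean document; each statement's English description precedes it below -/
import Mathlib

section
/- Let n ≥ 2 and l ≥ 1, let a, b ∈ B_l, and let 0 ≤ d ≤ l. Then H_l(a,b) = d if and only if the two-row skew tableau T_d(a,b) is nonmovable; equivalently, H_l(a,b) equals the smallest d ∈ {0,1,…,l} such that a_i < b_{i+d} for all 1 ≤ i ≤ l − d. -/
/-!
Statement 1: `H_l(a,b) = d` iff the two-row skew tableau `T_d(a,b)` is
nonmovable; equivalently `H_l(a,b)` is the least `d ∈ {0,…,l}` such that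
`a_i < b_{i+d}` for all `1 ≤ i ≤ l-d`.

Skew tableaux are encoded by row data: `m` rows (indexed `0,…,m-1` from top
to bottom), row `i` having `len i` boxes, occupying (0-indexed) columns
`off i, …, off i + len i - 1`, and a filling `f : ℕ → ℕ → ℕ` where `f i k`
is the entry of the `k`-th box (from the left) of row `i`; entries are
positive inside the shape and `0` outside.
-/

def H1 (a b : ℕ) : ℕ := if a < b then 0 else 1

noncomputable def Hl (l : ℕ) (a b : ℕ → ℕ) : ℕ :=
  Finset.univ.inf' ⟨1, Finset.mem_univ _⟩
    (fun σ : Equiv.Perm (Fin l) => ∑ i : Fin l, H1 (a i) (b (σ i)))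

def IsBRow (n l : ℕ) (a : ℕ → ℕ) : Prop :=
  (∀ k, k + 1 < l → a k ≤ a (k + 1)) ∧ (∀ k, k < l → 1 ≤ a k ∧ a k ≤ n) ∧
    (∀ k, l ≤ k → a k = 0)

/-- `f` is a filling of the shape with `m` rows of lengths `len`. -/
def IsFilling (m : ℕ) (len : ℕ → ℕ) (f : ℕ → ℕ → ℕ) : Prop :=
  (∀ i k, i < m → k < len i → 0 < f i k) ∧
  (∀ i k, m ≤ i ∨ len i ≤ k → f i k = 0)

/-- rows weakly increase from left to right. -/
def RowsWeak (m : ℕ) (len : ℕ → ℕ) (f : ℕ → ℕ → ℕ) : Prop :=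
  ∀ i, i < m → ∀ k, k + 1 < len i → f i k ≤ f i (k + 1)

/-- columns strictly increase from top to bottom (rows indexed top to bottom). -/
def ColsStrict (m : ℕ) (off len : ℕ → ℕ) (f : ℕ → ℕ → ℕ) : Prop :=
  ∀ i j, i + 1 < m → off i ≤ j → j < off i + len i →
    off (i + 1) ≤ j → j < off (i + 1) + len (i + 1) →
    f i (j - off i) < f (i + 1) (j - off (i + 1))

def Semistandard (m : ℕ) (off len : ℕ → ℕ) (f : ℕ → ℕ → ℕ) : Prop :=
  RowsWeak m len f ∧ ColsStrict m off len f

/-- The row data `(off, len)` describes a skew diagram `λ/μ`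
(rows listed top to bottom). -/
def IsSkewShape (m : ℕ) (off len : ℕ → ℕ) : Prop :=
  ∀ i, i + 1 < m → off (i + 1) ≤ off i ∧ off (i + 1) + len (i + 1) ≤ off i + len i

/-- move row `i0` one column to the left. -/
def shiftRow (off : ℕ → ℕ) (i0 : ℕ) : ℕ → ℕ := fun i => if i = i0 then off i - 1 else off i

/-- `f` is a nonmovable tableau of the given shape: it is semistandard, and no
(nonempty) row can be moved one box to the left keeping a semistandard filling of a
skew diagram. -/
def Nonmovable (m : ℕ) (off len : ℕ → ℕ) (f : ℕ → ℕ → ℕ) : Prop :=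
  Semistandard m off len f ∧
  ∀ i0, i0 < m → 0 < len i0 →
    ¬ (0 < off i0 ∧ IsSkewShape m (shiftRow off i0) len ∧
        Semistandard m (shiftRow off i0) len f)

/-- the shape of `T_d(a,b)`: top row (`a`) in columns `d,…,d+l-1`,
bottom row (`b`) in columns `0,…,l-1`. -/
def Toff (d : ℕ) : ℕ → ℕ := fun i => if i = 0 then d else 0

/-- the filling `T_d(a,b)`. -/
def Tfill (l : ℕ) (a b : ℕ → ℕ) : ℕ → ℕ → ℕ :=
  fun i k => if k < l then (if i = 0 then a k else if i = 1 then b k else 0) else 0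

lemma brow_mono {n l : ℕ} {a : ℕ → ℕ} (ha : IsBRow n l a) :
    ∀ {k k' : ℕ}, k ≤ k' → k' < l → a k ≤ a k' := by
  intro k k' hkk hk'
  induction k' with
  | zero =>
    have : k = 0 := by omega
    simp [this]
  | succ m ih =>
    rcases Nat.lt_or_ge k (m+1) with h | h
    · exact le_trans (ih (by omega) (by omega)) (ha.1 m hk')
    · have : k = m + 1 := by omega
      simp [this]

lemma H1_le_one (a b : ℕ) : H1 a b ≤ 1 := by unfold H1; split <;> omega

lemma Hl_le_of {l : ℕ} (hl : 1 ≤ l) (a b : ℕ → ℕ) {e : ℕ} (he : e ≤ l)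
    (hP : ∀ i, i + e < l → a i < b (i + e)) : Hl l a b ≤ e := by
  haveI : NeZero l := ⟨by omega⟩
  set σ : Equiv.Perm (Fin l) := Equiv.addRight (Fin.ofNat l e) with hσdef
  have h1 : Hl l a b ≤ ∑ i : Fin l, H1 (a i) (b (σ i)) :=
    Finset.inf'_le _ (Finset.mem_univ σ)
  refine h1.trans ?_
  have h2 : ∀ i : Fin l, H1 (a i) (b (σ i)) ≤ if (i : ℕ) + e < l then 0 else 1 := by
    intro i
    by_cases h : (i : ℕ) + e < l
    · have hσ : ((σ i : Fin l) : ℕ) = (i : ℕ) + e := by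
        have hx : ((σ i : Fin l) : ℕ) = ((i : ℕ) + e % l) % l := by
          simp [hσdef, Fin.add_def]
        rw [hx, Nat.mod_eq_of_lt (by omega : e < l), Nat.mod_eq_of_lt h]
      simp [h, H1, hσ, hP i h]
    · simpa [h] using H1_le_one _ _
  calc ∑ i : Fin l, H1 (a i) (b (σ i))
      ≤ ∑ i : Fin l, if (i : ℕ) + e < l then 0 else 1 :=
        Finset.sum_le_sum fun i _ => h2 i
    _ = ∑ k ∈ Finset.range l, if k + e < l then 0 else 1 :=
        Fin.sum_univ_eq_sum_range (fun k => if k + e < l then 0 else 1) l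
    _ = e := by
        rw [Finset.range_eq_Ico,
          ← Finset.sum_Ico_consecutive _ (Nat.zero_le (l - e)) (by omega : l - e ≤ l)]
        have h3 : ∑ k ∈ Finset.Ico 0 (l - e), (if k + e < l then 0 else 1) = 0 :=
          Finset.sum_eq_zero (by intro k hk; simp at hk ⊢; omega)
        have h4 : ∑ k ∈ Finset.Ico (l - e) l, (if k + e < l then 0 else 1) = e := by
          rw [Finset.sum_congr rfl (g := fun _ => 1) (fun k hk => by
            simp at hk ⊢; omega)]
          simp; omega
        omega

lemma Hl_mem {n l : ℕ} (hl : 1 ≤ l) {a b : ℕ → ℕ} (ha : IsBRow n l a) (hb : IsBRow n l b) :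
    Hl l a b ≤ l ∧ ∀ i, i + Hl l a b < l → a i < b (i + Hl l a b) := by
  haveI : NeZero l := ⟨by omega⟩
  constructor
  · refine le_trans (Finset.inf'_le _ (Finset.mem_univ (1 : Equiv.Perm (Fin l)))) ?_
    calc ∑ i : Fin l, H1 (a i) (b ((1 : Equiv.Perm (Fin l)) i))
        ≤ ∑ _i : Fin l, 1 := Finset.sum_le_sum fun i _ => H1_le_one _ _
      _ = l := by simp
  · obtain ⟨σ, -, hσ⟩ := Finset.exists_mem_eq_inf' (s := (Finset.univ : Finset (Equiv.Perm (Fin l))))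
      ⟨1, Finset.mem_univ _⟩ (fun σ => ∑ i : Fin l, H1 (a i) (b (σ i)))
    set c := Hl l a b with hc
    intro i hi
    by_contra hcon
    push_neg at hcon
    -- every j ≥ i with σ j ≤ i + c contributes 1
    set S : Finset (Fin l) :=
      Finset.univ.filter (fun j : Fin l => i ≤ (j : ℕ) ∧ (σ j : ℕ) ≤ i + c) with hS
    have hone : ∀ j ∈ S, H1 (a (j : ℕ)) (b ((σ j : Fin l) : ℕ)) = 1 := by
      intro j hj
      simp [hS] at hj
      have h1 : b ((σ j : Fin l) : ℕ) ≤ b (i + c) := brow_mono hb hj.2 hi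
      have h2 : a i ≤ a (j : ℕ) := brow_mono ha hj.1 j.isLt
      unfold H1; split
      · omega
      · rfl
    have hsum : c = ∑ j : Fin l, H1 (a (j : ℕ)) (b ((σ j : Fin l) : ℕ)) := hσ
    have hge : ∑ j : Fin l, H1 (a (j : ℕ)) (b ((σ j : Fin l) : ℕ)) ≥ S.card := by
      calc ∑ j : Fin l, H1 (a (j : ℕ)) (b ((σ j : Fin l) : ℕ))
          ≥ ∑ j ∈ S, H1 (a (j : ℕ)) (b ((σ j : Fin l) : ℕ)) :=
            Finset.sum_le_sum_of_subset (Finset.subset_univ S)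
        _ = ∑ _j ∈ S, 1 := Finset.sum_congr rfl hone
        _ = S.card := by simp
    -- now bound S.card from below
    have hil : i < l := by omega
    have hicl : i + c < l := hi
    have hcard1 : (Finset.univ.filter (fun j : Fin l => (j : ℕ) < i)).card = i := by
      have : Finset.univ.filter (fun j : Fin l => (j : ℕ) < i) = Finset.Iio (⟨i, hil⟩ : Fin l) := by
        ext j; simp [Fin.lt_def]
      rw [this, Fin.card_Iio]
    have hcard2 : (Finset.univ.filter (fun j : Fin l => i + c < (σ j : ℕ))).card
        = l - (i + c + 1) := by
      have hb2 : (Finset.univ.filter (fun j : Fin l => i + c < (σ j : ℕ))).card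
          = (Finset.univ.filter (fun k : Fin l => i + c < (k : ℕ))).card := by
        apply Finset.card_bij' (fun j _ => σ j) (fun k _ => σ.symm k) <;>
          simp [Fin.lt_def]
      rw [hb2]
      have : Finset.univ.filter (fun k : Fin l => i + c < (k : ℕ))
          = Finset.Ioi (⟨i + c, hicl⟩ : Fin l) := by
        ext k; simp [Fin.lt_def]
      rw [this, Fin.card_Ioi]
      simp only [Fin.val_mk]
      omega
    have hcompl : Sᶜ ⊆ Finset.univ.filter (fun j : Fin l => (j : ℕ) < i)
        ∪ Finset.univ.filter (fun j : Fin l => i + c < (σ j : ℕ)) := by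
      intro j hj
      simp [hS, Finset.mem_compl] at hj ⊢
      omega
    have hcc : Sᶜ.card ≤ i + (l - (i + c + 1)) := by
      calc Sᶜ.card ≤ _ := Finset.card_le_card hcompl
        _ ≤ _ + _ := Finset.card_union_le _ _
        _ = i + (l - (i + c + 1)) := by rw [hcard1, hcard2]
    have htot : S.card + Sᶜ.card = l := by
      rw [Finset.card_add_card_compl]; simp
    omega

lemma P_mono {n l : ℕ} {b : ℕ → ℕ} (hb : IsBRow n l b) (a : ℕ → ℕ) {e e' : ℕ}
    (h : e ≤ e') (hP : ∀ i, i + e < l → a i < b (i + e)) :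
    ∀ i, i + e' < l → a i < b (i + e') :=
  fun i hi => lt_of_lt_of_le (hP i (by omega)) (brow_mono hb (by omega) hi)

lemma semis_iff {n l : ℕ} {a b : ℕ → ℕ} (ha : IsBRow n l a) (hb : IsBRow n l b)
    (d : ℕ) :
    Semistandard 2 (Toff d) (fun _ => l) (Tfill l a b) ↔
      ∀ i, i + d < l → a i < b (i + d) := by
  constructor
  · rintro ⟨-, hcol⟩ i hi
    have := hcol 0 (i + d) (by norm_num) (by simp [Toff]) (by simp [Toff]; omega)
      (by simp [Toff]) (by simp [Toff]; omega)
    simpa [Toff, Tfill, hi, show i + d - d = i by omega,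
      show i < l by omega] using this
  · intro hP
    constructor
    · intro i hi k hk
      have hk' : k + 1 < l := hk
      interval_cases i <;>
        simp only [Tfill, if_pos (show k < l by omega), if_pos hk']
      · simpa using ha.1 k hk'
      · simpa using hb.1 k hk'
    · intro i j hi hj1 hj2 hj3 hj4
      have hi0 : i = 0 := by omega
      subst hi0
      have hdj : d ≤ j := by simpa [Toff] using hj1
      have hjl : j < l := by simpa [Toff] using hj4
      have h1 : Tfill l a b 0 (j - Toff d 0) = a (j - d) := by
        simp [Tfill, Toff, show j - d < l by omega]
      have h2 : Tfill l a b (0 + 1) (j - Toff d (0 + 1)) = b j := by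
        simp [Tfill, Toff, hjl]
      rw [h1, h2]
      have := hP (j - d) (by omega)
      simpa [show j - d + d = j by omega] using this

lemma shiftToff (d : ℕ) : shiftRow (Toff d) 0 = Toff (d - 1) := by
  funext i
  by_cases h : i = 0 <;> simp [shiftRow, Toff, h]

lemma skewToff (e l : ℕ) : IsSkewShape 2 (Toff e) (fun _ => l) := by
  intro i hi
  have : i = 0 := by omega
  subst this
  simp [Toff]


/-- `H_l(a,b) = d` iff `T_d(a,b)` is nonmovable; equivalently,
`H_l(a,b)` is the smallest `d ∈ {0,…,l}` with `a_i < b_{i+d}` for all `i + d < l`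
(0-indexed). -/
theorem energy_eq_iff_nonmovable (n l : ℕ) (hn : 2 ≤ n) (hl : 1 ≤ l)
    (a b : ℕ → ℕ) (ha : IsBRow n l a) (hb : IsBRow n l b)
    (d : ℕ) (hd : d ≤ l) :
    (Hl l a b = d ↔ Nonmovable 2 (Toff d) (fun _ => l) (Tfill l a b)) ∧
    IsLeast {e : ℕ | e ≤ l ∧ ∀ i : ℕ, i + e < l → a i < b (i + e)} (Hl l a b) := by
  obtain ⟨hHle, hHP⟩ := Hl_mem hl ha hb
  have hleast : IsLeast {e : ℕ | e ≤ l ∧ ∀ i : ℕ, i + e < l → a i < b (i + e)} (Hl l a b) :=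
    ⟨⟨hHle, hHP⟩, fun e ⟨he, hPe⟩ => Hl_le_of hl a b he hPe⟩
  refine ⟨?_, hleast⟩
  constructor
  · intro hEq
    subst hEq
    refine ⟨(semis_iff ha hb _).mpr hHP, ?_⟩
    rintro i0 hi0 hlen ⟨hpos, -, hsemi⟩
    interval_cases i0
    · -- moving top row: get P (d-1) with d = Hl, contradiction with minimality
      rw [shiftToff] at hsemi
      have hP' := (semis_iff ha hb _).mp hsemi
      have : Hl l a b ≤ Hl l a b - 1 :=
        Hl_le_of hl a b (by omega) hP'
      simp [Toff] at hpos
      omega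
    · simp [Toff] at hpos
  · rintro ⟨hsemi, hnm⟩
    have hPd := (semis_iff ha hb _).mp hsemi
    have hle : Hl l a b ≤ d := Hl_le_of hl a b hd hPd
    by_contra hne
    have hlt : Hl l a b < d := lt_of_le_of_ne hle hne
    have hdpos : 0 < d := by omega
    have hP' : ∀ i, i + (d - 1) < l → a i < b (i + (d - 1)) :=
      P_mono hb a (by omega) hHP
    exact hnm 0 (by norm_num) (by omega : 0 < l)
      ⟨by simp only [Toff, if_pos rfl]; exact hdpos, by rw [shiftToff]; exact skewToff _ _,
        by rw [shiftToff]; exact (semis_iff ha hb _).mpr hP'⟩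
end

section
/- Fix n ≥ 2 and l ≥ 1, and let h = (h_i)_{i≥1} ∈ {0,1,…,l}^ℕ. The following conditions are equivalent: (i) h lies in the image ρ(B_l^ℕ) of the local energy map; (ii) there exists a nonmovable tableau of shape κ̃(h) with entries in {1,…,n}; (iii) every column of κ̃(h) contains at most n boxes; (iv) h_i + h_{i+1} + ⋯ + h_{i+n−1} ≥ l for every i ≥ 1. -/
def IsPath (n l : ℕ) (s : ℕ → ℕ → ℕ) : Prop := ∀ i, IsBRow n l (s i)

noncomputable def locEnergy (l : ℕ) (s : ℕ → ℕ → ℕ) : ℕ → ℕ :=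
  fun i => Hl l (s (i + 1)) (s i)

def Ooff (h : ℕ → ℕ) : ℕ → ℕ := fun i => ∑ j ∈ Finset.range i, h j

def InfIsFilling (len : ℕ → ℕ) (f : ℕ → ℕ → ℕ) : Prop :=
  (∀ i k, k < len i → 0 < f i k) ∧ (∀ i k, len i ≤ k → f i k = 0)

def InfEntriesLE (n : ℕ) (f : ℕ → ℕ → ℕ) : Prop := ∀ i k, f i k ≤ n

def InfRowsWeak (len : ℕ → ℕ) (f : ℕ → ℕ → ℕ) : Prop :=
  ∀ i k, k + 1 < len i → f i k ≤ f i (k + 1)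

def InfColsStrict (off len : ℕ → ℕ) (f : ℕ → ℕ → ℕ) : Prop :=
  ∀ i j, off (i + 1) ≤ j → j < off (i + 1) + len (i + 1) →
    off i ≤ j → j < off i + len i →
    f (i + 1) (j - off (i + 1)) < f i (j - off i)

def InfSemistandard (off len : ℕ → ℕ) (f : ℕ → ℕ → ℕ) : Prop :=
  InfRowsWeak len f ∧ InfColsStrict off len f

def InfIsSkewShape (off len : ℕ → ℕ) : Prop :=
  ∀ i, off i ≤ off (i + 1) ∧ off i + len i ≤ off (i + 1) + len (i + 1)

def InfShift (off : ℕ → ℕ) (i0 : ℕ) : ℕ → ℕ := fun i => if i = i0 then off i - 1 else off i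

def InfNonmovable (off len : ℕ → ℕ) (f : ℕ → ℕ → ℕ) : Prop :=
  InfSemistandard off len f ∧
  ∀ i0, 0 < len i0 →
    ¬ (0 < off i0 ∧ InfIsSkewShape (InfShift off i0) len ∧
        InfSemistandard (InfShift off i0) len f)

def NMTinf (n l : ℕ) (h : ℕ → ℕ) : Set (ℕ → ℕ → ℕ) :=
  {f | InfIsFilling (fun _ => l) f ∧ InfEntriesLE n f ∧
    InfNonmovable (Ooff h) (fun _ => l) f}

/-! ### Auxiliary lemmas -/

section Aux

private lemma Ooff_zero (h : ℕ → ℕ) : Ooff h 0 = 0 := by simp [Ooff]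

private lemma Ooff_succ (h : ℕ → ℕ) (i : ℕ) : Ooff h (i + 1) = Ooff h i + h i := by
  simp [Ooff, Finset.sum_range_succ]

private lemma Ooff_add (h : ℕ → ℕ) (i m : ℕ) :
    Ooff h (i + m) = Ooff h i + ∑ j ∈ Finset.range m, h (i + j) := by
  induction m with
  | zero => simp [Ooff]
  | succ m ih =>
    rw [show i + (m + 1) = (i + m) + 1 by omega, Ooff_succ, ih, Finset.sum_range_succ]
    omega

private lemma Ooff_mono (h : ℕ → ℕ) {i i' : ℕ} (hii : i ≤ i') : Ooff h i ≤ Ooff h i' := by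
  obtain ⟨m, rfl⟩ := Nat.exists_eq_add_of_le hii
  rw [Ooff_add]; omega

/-- Largest row index whose offset is `≤ j`. -/
private def Mx (n : ℕ) (h : ℕ → ℕ) (j : ℕ) : ℕ :=
  Nat.findGreatest (fun i => Ooff h i ≤ j) (n * (j + 1))

section M
variable {n l : ℕ} {h : ℕ → ℕ} (hl : 1 ≤ l)
  (hiv : ∀ i : ℕ, l ≤ ∑ j ∈ Finset.range n, h (i + j))

include hl hiv

private lemma Ooff_growth (k : ℕ) : k ≤ Ooff h (n * k) := by
  induction k with
  | zero => omega
  | succ k ih =>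
    have h1 : Ooff h (n * k + n) = Ooff h (n * k) + ∑ j ∈ Finset.range n, h (n * k + j) :=
      Ooff_add h _ _
    have h2 := hiv (n * k)
    have h3 : n * (k + 1) = n * k + n := by ring
    rw [h3, h1]; omega

private lemma Ooff_le_bound {i j : ℕ} (hij : Ooff h i ≤ j) : i ≤ n * (j + 1) := by
  by_contra hc
  have h1 : Ooff h (n * (j + 1)) ≤ Ooff h i := Ooff_mono h (by omega)
  have h2 := Ooff_growth (n := n) hl hiv (j + 1)
  omega

omit hl hiv in
private lemma Ooff_Mx_le (j : ℕ) : Ooff h (Mx n h j) ≤ j :=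
  Nat.findGreatest_spec (P := fun i => Ooff h i ≤ j) (Nat.zero_le _) (by simp [Ooff_zero])

private lemma le_Mx {i j : ℕ} (hij : Ooff h i ≤ j) : i ≤ Mx n h j :=
  Nat.le_findGreatest (P := fun i => Ooff h i ≤ j) (Ooff_le_bound hl hiv hij) hij

private lemma Mx_mono {j j' : ℕ} (hjj : j ≤ j') : Mx n h j ≤ Mx n h j' :=
  le_Mx hl hiv (le_trans (Ooff_Mx_le j) hjj)

private lemma Mx_lt_addn {i j : ℕ} (hij : Ooff h i ≤ j) (hjl : j < Ooff h i + l) :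
    Mx n h j < i + n := by
  by_contra hc
  have h1 : Ooff h (i + n) ≤ Ooff h (Mx n h j) := Ooff_mono h (by omega)
  have h2 : Ooff h (i + n) = Ooff h i + ∑ j ∈ Finset.range n, h (i + j) := Ooff_add h _ _
  have h3 := hiv i
  have h4 := Ooff_Mx_le (n := n) (h := h) j
  omega

end M

/-- The canonical filling / path associated to offsets `Ooff h`. -/
private def sFun (n l : ℕ) (h : ℕ → ℕ) (i k : ℕ) : ℕ :=
  if k < l then Mx n h (Ooff h i + k) + 1 - i else 0

private def cntF (l : ℕ) (x : ℕ → ℕ) (c : ℕ) : ℕ :=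
  (Finset.univ.filter (fun k : Fin l => x k ≤ c)).card

private lemma H1_sum_lower (l : ℕ) (a b : ℕ → ℕ) (σ : Equiv.Perm (Fin l)) (c : ℕ) :
    cntF l b (c + 1) ≤ (∑ k : Fin l, H1 (a k) (b (σ k))) + cntF l a c := by
  classical
  set B := Finset.univ.filter (fun k : Fin l => b (σ k) ≤ c + 1) with hBdef
  set A := Finset.univ.filter (fun k : Fin l => a k ≤ c) with hAdef
  have hcard : cntF l b (c + 1) = B.card := by
    apply Finset.card_equiv σ.symm
    intro k
    simp [hBdef, Equiv.apply_symm_apply]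
  have h1 : (B \ A).card ≤ ∑ k : Fin l, H1 (a k) (b (σ k)) := by
    calc (B \ A).card = ∑ k ∈ B \ A, 1 := by simp
    _ ≤ ∑ k ∈ B \ A, H1 (a k) (b (σ k)) := by
        apply Finset.sum_le_sum
        intro k hk
        rw [Finset.mem_sdiff, hBdef, hAdef, Finset.mem_filter, Finset.mem_filter] at hk
        have hb : b (σ k) ≤ c + 1 := hk.1.2
        have ha : ¬ a k ≤ c := fun hc => hk.2 ⟨Finset.mem_univ _, hc⟩
        unfold H1
        rw [if_neg (by omega)]
    _ ≤ ∑ k : Fin l, H1 (a k) (b (σ k)) :=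
        Finset.sum_le_sum_of_subset (Finset.subset_univ _)
  have h2 : B.card ≤ (B \ A).card + A.card := Finset.card_le_card_sdiff_add_card
  have h3 : cntF l a c = A.card := rfl
  omega

private lemma le_Hl (l : ℕ) (a b : ℕ → ℕ) (c : ℕ) :
    cntF l b (c + 1) ≤ Hl l a b + cntF l a c := by
  obtain ⟨σ, -, hσ⟩ := Finset.exists_mem_eq_inf'
    (⟨1, Finset.mem_univ _⟩ : (Finset.univ : Finset (Equiv.Perm (Fin l))).Nonempty)
    (fun σ : Equiv.Perm (Fin l) => ∑ i : Fin l, H1 (a i) (b (σ i)))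
  rw [Hl, hσ]
  exact H1_sum_lower l a b σ c

private lemma exists_jump (g : ℕ → ℕ) (p q : ℕ) (hpq : p ≤ q) (hg : g p < g q) :
    ∃ j, p ≤ j ∧ j < q ∧ g j < g (j + 1) := by
  induction q with
  | zero =>
    have hp0 : p = 0 := by omega
    subst hp0; omega
  | succ q ih =>
    by_cases hq : g q < g (q + 1)
    · rcases Nat.lt_or_ge p (q + 1) with hp | hp
      · exact ⟨q, by omega, by omega, hq⟩
      · have hp' : p = q + 1 := by omega
        subst hp'; omega
    · have hp : p ≠ q + 1 := by rintro rfl; omega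
      obtain ⟨j, h1, h2, h3⟩ := ih (by omega) (by omega)
      exact ⟨j, h1, by omega, h3⟩

private lemma card_val_lt (l m : ℕ) (hm : m ≤ l) :
    (Finset.univ.filter (fun k : Fin l => (k : ℕ) < m)).card = m := by
  rw [Finset.card_filter]
  rw [Fin.sum_univ_eq_sum_range (fun k => if k < m then 1 else 0) l]
  rw [Finset.range_eq_Ico, ← Finset.sum_Ico_consecutive _ (Nat.zero_le m) hm]
  have e1 : ∑ k ∈ Finset.Ico 0 m, (if k < m then 1 else 0) = m := by
    rw [Finset.sum_congr rfl (fun k hk => if_pos (Finset.mem_Ico.mp hk).2)]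
    simp
  have e2 : ∑ k ∈ Finset.Ico m l, (if k < m then (1 : ℕ) else 0) = 0 := by
    rw [Finset.sum_congr rfl (fun k hk => if_neg (by have := (Finset.mem_Ico.mp hk).1; omega))]
    simp
  omega

end Aux

/-- For `h ∈ {0,…,l}^ℕ` the following are equivalent:
(i) `h` is in the image of the local energy map `ρ`;
(ii) there is a nonmovable tableau of shape `κ̃(h)` with entries in `{1,…,n}`;
(iii) every column of `κ̃(h)` contains at most `n` boxes;
(iv) `h_i + ⋯ + h_{i+n-1} ≥ l` for every `i`. -/
theorem image_of_local_energy_tfae (n l : ℕ) (hn : 2 ≤ n) (hl : 1 ≤ l)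
    (h : ℕ → ℕ) (hhl : ∀ i, h i ≤ l) :
    List.TFAE
      [ (∃ s : ℕ → ℕ → ℕ, IsPath n l s ∧ locEnergy l s = h),
        (∃ f, f ∈ NMTinf n l h),
        (∀ j : ℕ, ({i : ℕ | Ooff h i ≤ j ∧ j < Ooff h i + l}).Finite ∧
          ({i : ℕ | Ooff h i ≤ j ∧ j < Ooff h i + l}).ncard ≤ n),
        (∀ i : ℕ, l ≤ ∑ j ∈ Finset.range n, h (i + j)) ] := by
  tfae_have 1 → 4 := by
    rintro ⟨s, hs, hE⟩ i
    have hcnt_top : cntF l (s i) n = l := by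
      rw [cntF, Finset.filter_true_of_mem, Finset.card_univ, Fintype.card_fin]
      intro k _
      exact ((hs i).2.1 k k.isLt).2
    have hcnt_bot : cntF l (s (i + n)) 0 = 0 := by
      rw [cntF, Finset.filter_false_of_mem, Finset.card_empty]
      intro k _
      have := ((hs (i + n)).2.1 k k.isLt).1
      omega
    have key : ∀ m, m ≤ n →
        cntF l (s i) n ≤ (∑ j ∈ Finset.range m, h (i + j)) + cntF l (s (i + m)) (n - m) := by
      intro m
      induction m with
      | zero => intro _; simp
      | succ m ih =>
        intro hm
        have h1 := ih (by omega)
        have h2 := le_Hl l (s (i + m + 1)) (s (i + m)) (n - (m + 1))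
        have hE' : Hl l (s (i + m + 1)) (s (i + m)) = h (i + m) := by
          have := congrFun hE (i + m)
          simpa [locEnergy] using this
        rw [hE'] at h2
        have e : n - (m + 1) + 1 = n - m := by omega
        rw [e] at h2
        rw [Finset.sum_range_succ]
        have e2 : i + (m + 1) = i + m + 1 := by omega
        rw [e2]
        omega
    have hfin := key n le_rfl
    rw [hcnt_top, Nat.sub_self, hcnt_bot] at hfin
    omega
  tfae_have 2 → 4 := by
    rintro ⟨f, hfill, hle, ⟨hrw, hcs⟩, -⟩ i
    by_contra hc
    push_neg at hc
    have hO : Ooff h (i + n) < Ooff h i + l := by rw [Ooff_add]; omega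
    have chain : ∀ m, m ≤ n →
        f (i + m) (Ooff h (i + n) - Ooff h (i + m)) + m ≤
          f i (Ooff h (i + n) - Ooff h i) := by
      intro m
      induction m with
      | zero => intro _; simp
      | succ m ih =>
        intro hm
        have h1 := ih (by omega)
        have c1 : Ooff h (i + m + 1) ≤ Ooff h (i + n) := Ooff_mono h (by omega)
        have c2 : Ooff h i ≤ Ooff h (i + m + 1) := Ooff_mono h (by omega)
        have c3 : Ooff h (i + m) ≤ Ooff h (i + n) := Ooff_mono h (by omega)
        have c4 : Ooff h i ≤ Ooff h (i + m) := Ooff_mono h (by omega)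
        have hcs' := hcs (i + m) (Ooff h (i + n)) c1 (by simpa using by omega)
          c3 (by simpa using by omega)
        have e2 : i + (m + 1) = i + m + 1 := by omega
        rw [e2]
        omega
    have hfin := chain n le_rfl
    rw [Nat.sub_self] at hfin
    have h0 : 0 < f (i + n) 0 := hfill.1 (i + n) 0 (by simpa using by omega)
    have hfn := hle i (Ooff h (i + n) - Ooff h i)
    omega
  tfae_have 3 → 4 := by
    intro h3 i
    by_contra hc
    push_neg at hc
    have hO : Ooff h (i + n) < Ooff h i + l := by rw [Ooff_add]; omega
    have hsub : Set.Icc i (i + n) ⊆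
        {m : ℕ | Ooff h m ≤ Ooff h (i + n) ∧ Ooff h (i + n) < Ooff h m + l} := by
      rintro m hm
      simp only [Set.mem_Icc] at hm
      refine ⟨Ooff_mono h hm.2, ?_⟩
      have := Ooff_mono h hm.1
      omega
    have hcard := Set.ncard_le_ncard hsub (h3 (Ooff h (i + n))).1
    have hIcc : (Set.Icc i (i + n)).ncard = n + 1 := by
      rw [← Finset.coe_Icc, Set.ncard_coe_finset, Nat.card_Icc]; omega
    have := (h3 (Ooff h (i + n))).2
    omega
  tfae_have 4 → 3 := by
    intro h4 j
    have hsub : {i : ℕ | Ooff h i ≤ j ∧ j < Ooff h i + l} ⊆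
        Set.Icc (Mx n h j + 1 - n) (Mx n h j) := by
      rintro i ⟨h1, h2⟩
      have hle' := le_Mx hl h4 h1
      have hlt := Mx_lt_addn hl h4 h1 h2
      simp only [Set.mem_Icc]; omega
    have hfin : (Set.Icc (Mx n h j + 1 - n) (Mx n h j)).Finite := Set.finite_Icc _ _
    refine ⟨hfin.subset hsub, ?_⟩
    have hcard := Set.ncard_le_ncard hsub hfin
    have hIcc : (Set.Icc (Mx n h j + 1 - n) (Mx n h j)).ncard =
        Mx n h j + 1 - (Mx n h j + 1 - n) := by
      rw [← Finset.coe_Icc, Set.ncard_coe_finset, Nat.card_Icc]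
    omega
  tfae_have 4 → 2 := by
    intro h4
    refine ⟨sFun n l h, ⟨?_, ?_⟩, ?_, ⟨?_, ?_⟩, ?_⟩
    · -- positive on the shape
      intro i k hk
      have hk' : k < l := hk
      have hge := le_Mx hl h4 (Nat.le_add_right (Ooff h i) k)
      simp only [sFun]
      rw [if_pos hk']
      omega
    · -- zero outside
      intro i k hk
      have hk' : l ≤ k := hk
      simp only [sFun]
      rw [if_neg (by omega)]
    · -- entries ≤ n
      intro i k
      by_cases hk : k < l
      · have hlt := Mx_lt_addn hl h4 (Nat.le_add_right (Ooff h i) k) (by omega)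
        simp only [sFun]
        rw [if_pos hk]
        omega
      · simp only [sFun]
        rw [if_neg hk]
        omega
    · -- rows weakly increasing
      intro i k hk
      have hk' : k + 1 < l := hk
      have hm := Mx_mono hl h4 (show Ooff h i + k ≤ Ooff h i + (k + 1) by omega)
      simp only [sFun]
      rw [if_pos (by omega : k < l), if_pos hk']
      omega
    · -- columns strict
      intro i j hj1 hj2 hj3 hj4
      have hj2' : j < Ooff h (i + 1) + l := hj2
      have hj4' : j < Ooff h i + l := hj4
      have hk1 : j - Ooff h (i + 1) < l := by omega
      have hk2 : j - Ooff h i < l := by omega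
      have e1 : Ooff h (i + 1) + (j - Ooff h (i + 1)) = j := by omega
      have e2 : Ooff h i + (j - Ooff h i) = j := by omega
      simp only [sFun]
      rw [if_pos hk1, if_pos hk2, e1, e2]
      have := le_Mx hl h4 hj1
      omega
    · -- nonmovable
      intro i0 hlen hcontra
      obtain ⟨hOpos, hskew, hss'⟩ := hcontra
      obtain ⟨i', rfl⟩ : ∃ i', i0 = i' + 1 := by
        cases i0 with
        | zero => rw [Ooff_zero] at hOpos; omega
        | succ m => exact ⟨m, rfl⟩
      have s1 : InfShift (Ooff h) (i' + 1) (i' + 1) = Ooff h (i' + 1) - 1 := by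
        simp [InfShift]
      have s2 : InfShift (Ooff h) (i' + 1) i' = Ooff h i' := by
        simp only [InfShift]
        rw [if_neg (by omega)]
      have hskew' := (hskew i').1
      rw [s1, s2] at hskew'
      have hOsucc := Ooff_succ h i'
      have hhli' := hhl i'
      have hh : 1 ≤ h i' := by omega
      have hMp : Mx n h (Ooff h (i' + 1) - 1) ≤ i' := by
        by_contra hcm
        have p1 := Ooff_Mx_le (n := n) (h := h) (Ooff h (i' + 1) - 1)
        have p2 : Ooff h (i' + 1) ≤ Ooff h (Mx n h (Ooff h (i' + 1) - 1)) :=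
          Ooff_mono h (by omega)
        omega
      have hMq : i' + 1 ≤ Mx n h (Ooff h i' + l) := le_Mx hl h4 (by omega)
      obtain ⟨j, hpj, hjq, hjump⟩ := exists_jump (Mx n h) (Ooff h (i' + 1) - 1)
        (Ooff h i' + l) (by omega) (by omega)
      have hcs2 := hss'.2 i' j
      rw [s1, s2] at hcs2
      have happ := hcs2 hpj (by simpa using by omega) (by omega) (by simpa using by omega)
      have hk1 : j - (Ooff h (i' + 1) - 1) < l := by omega
      have hk2 : j - Ooff h i' < l := by omega
      have e1 : Ooff h (i' + 1) + (j - (Ooff h (i' + 1) - 1)) = j + 1 := by omega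
      have e2 : Ooff h i' + (j - Ooff h i') = j := by omega
      simp only [sFun] at happ
      rw [if_pos hk1, if_pos hk2, e1, e2] at happ
      have m1 : i' + 1 ≤ Mx n h (j + 1) := le_Mx hl h4 (by omega)
      have m2 : i' ≤ Mx n h j := le_Mx hl h4 (by omega)
      omega
  tfae_have 4 → 1 := by
    intro h4
    obtain ⟨l', rfl⟩ : ∃ l', l = l' + 1 := ⟨l - 1, by omega⟩
    refine ⟨sFun n (l' + 1) h, ?_, ?_⟩
    · -- IsPath
      intro i
      refine ⟨?_, ?_, ?_⟩
      · intro k hk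
        have hm := Mx_mono hl h4 (show Ooff h i + k ≤ Ooff h i + (k + 1) by omega)
        simp only [sFun]
        rw [if_pos (by omega : k < l' + 1), if_pos hk]
        omega
      · intro k hk
        have hge := le_Mx hl h4 (Nat.le_add_right (Ooff h i) k)
        have hlt := Mx_lt_addn hl h4 (Nat.le_add_right (Ooff h i) k) (by omega)
        simp only [sFun]
        rw [if_pos hk]
        omega
      · intro k hk
        simp only [sFun]
        rw [if_neg (by omega)]
    · funext i
      simp only [locEnergy, Hl]
      apply le_antisymm
      · -- upper bound via cyclic shift
        letI : NatCast (Fin (l' + 1)) := Fin.NatCast.instNatCast (l' + 1)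
        set σ : Equiv.Perm (Fin (l' + 1)) := Equiv.addRight ((h i : Fin (l' + 1))) with hσ
        have hval : ∀ k : Fin (l' + 1), ((σ k : Fin (l' + 1)) : ℕ) =
            ((k : ℕ) + h i) % (l' + 1) := by
          intro k
          rw [hσ]
          simp only [Equiv.coe_addRight]
          rw [Fin.val_add, Fin.val_natCast, Nat.add_mod_mod]
        have hbound : ∀ k : Fin (l' + 1),
            H1 (sFun n (l' + 1) h (i + 1) k) (sFun n (l' + 1) h i (σ k)) ≤
              (if (k : ℕ) + h i < l' + 1 then 0 else 1) := by
          intro k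
          by_cases hk : (k : ℕ) + h i < l' + 1
          · rw [if_pos hk]
            have hv : ((σ k : Fin (l' + 1)) : ℕ) = (k : ℕ) + h i := by
              rw [hval k, Nat.mod_eq_of_lt hk]
            have hge := le_Mx hl h4 (Nat.le_add_right (Ooff h (i + 1)) (k : ℕ))
            have e1 : sFun n (l' + 1) h (i + 1) (k : ℕ) =
                Mx n h (Ooff h (i + 1) + (k : ℕ)) + 1 - (i + 1) := by
              simp only [sFun]; rw [if_pos k.isLt]
            have e2 : sFun n (l' + 1) h i ((σ k : Fin (l' + 1)) : ℕ) =
                Mx n h (Ooff h (i + 1) + (k : ℕ)) + 1 - i := by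
              simp only [sFun]
              rw [hv, if_pos hk]
              have e3 : Ooff h i + ((k : ℕ) + h i) = Ooff h (i + 1) + (k : ℕ) := by
                rw [Ooff_succ]; omega
              rw [e3]
            rw [e1, e2]
            unfold H1
            rw [if_pos (by omega)]
          · rw [if_neg hk]
            unfold H1
            split <;> omega
        refine le_trans (Finset.inf'_le _ (Finset.mem_univ σ)) ?_
        calc (∑ k : Fin (l' + 1),
              H1 (sFun n (l' + 1) h (i + 1) k) (sFun n (l' + 1) h i (σ k)))
            ≤ ∑ k : Fin (l' + 1), (if (k : ℕ) + h i < l' + 1 then 0 else 1) :=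
            Finset.sum_le_sum (fun k _ => hbound k)
          _ = h i := by
            rw [Fin.sum_univ_eq_sum_range (fun k => if k + h i < l' + 1 then 0 else 1)
              (l' + 1)]
            rw [Finset.range_eq_Ico,
              ← Finset.sum_Ico_consecutive _ (Nat.zero_le (l' + 1 - h i)) (Nat.sub_le _ _)]
            have hhi := hhl i
            have e1 : ∑ k ∈ Finset.Ico 0 (l' + 1 - h i),
                (if k + h i < l' + 1 then (0 : ℕ) else 1) = 0 := by
              rw [Finset.sum_congr rfl
                (fun k hk => if_pos (by have := (Finset.mem_Ico.mp hk).2; omega))]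
              simp
            have e2 : ∑ k ∈ Finset.Ico (l' + 1 - h i) (l' + 1),
                (if k + h i < l' + 1 then (0 : ℕ) else 1) = h i := by
              rw [Finset.sum_congr rfl
                (fun k hk => if_neg (by have := (Finset.mem_Ico.mp hk).1; omega))]
              rw [Finset.sum_const, Nat.card_Ico, smul_eq_mul, mul_one]
              omega
            omega
      · -- lower bound
        rcases Nat.eq_zero_or_pos (h i) with h0 | hpos
        · rw [h0]; exact Nat.zero_le _
        · have hO1 : Ooff h (i + 1) = Ooff h i + h i := Ooff_succ h i
          have hMp : Mx n h (Ooff h (i + 1) - 1) ≤ i := by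
            by_contra hcm
            have p1 := Ooff_Mx_le (n := n) (h := h) (Ooff h (i + 1) - 1)
            have p2 : Ooff h (i + 1) ≤ Ooff h (Mx n h (Ooff h (i + 1) - 1)) :=
              Ooff_mono h (by omega)
            omega
          have hMq : i + 1 ≤ Mx n h (Ooff h i + (l' + 1)) :=
            le_Mx hl h4 (by have := hhl i; omega)
          obtain ⟨j, hpj, hjq, hjump⟩ := exists_jump (Mx n h) (Ooff h (i + 1) - 1)
            (Ooff h i + (l' + 1)) (by have := hhl i; omega) (by omega)
          have hOij : Ooff h i ≤ j := by omega
          have ht : i ≤ Mx n h j := le_Mx hl h4 hOij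
          have hdl : h i + (j + 1 - Ooff h (i + 1)) ≤ l' + 1 := by omega
          apply Finset.le_inf'
          intro σ _
          have key := H1_sum_lower (l' + 1) (sFun n (l' + 1) h (i + 1))
            (sFun n (l' + 1) h i) σ (Mx n h j - i)
          have hA : h i + (j + 1 - Ooff h (i + 1)) ≤
              cntF (l' + 1) (sFun n (l' + 1) h i) (Mx n h j - i + 1) := by
            rw [← card_val_lt (l' + 1) (h i + (j + 1 - Ooff h (i + 1))) hdl]
            apply Finset.card_le_card
            intro k hk
            rw [Finset.mem_filter] at hk ⊢
            refine ⟨Finset.mem_univ _, ?_⟩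
            have hkv : (k : ℕ) < h i + (j + 1 - Ooff h (i + 1)) := hk.2
            have hcol : Ooff h i + (k : ℕ) ≤ j := by omega
            have hm1 := Mx_mono hl h4 hcol
            have hm2 := le_Mx hl h4 (Nat.le_add_right (Ooff h i) (k : ℕ))
            simp only [cntF, sFun]
            rw [if_pos k.isLt]
            omega
          have hB : cntF (l' + 1) (sFun n (l' + 1) h (i + 1)) (Mx n h j - i) ≤
              j + 1 - Ooff h (i + 1) := by
            rw [← card_val_lt (l' + 1) (j + 1 - Ooff h (i + 1)) (by omega)]
            apply Finset.card_le_card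
            intro k hk
            rw [Finset.mem_filter] at hk ⊢
            refine ⟨Finset.mem_univ _, ?_⟩
            by_contra hkd
            have hge : j + 1 ≤ Ooff h (i + 1) + (k : ℕ) := by omega
            have hm1 : Mx n h (j + 1) ≤ Mx n h (Ooff h (i + 1) + (k : ℕ)) :=
              Mx_mono hl h4 hge
            have hm2 := le_Mx hl h4 (Nat.le_add_right (Ooff h (i + 1)) (k : ℕ))
            have hsk := hk.2
            simp only [sFun] at hsk
            rw [if_pos k.isLt] at hsk
            omega
          omega
  tfae_finish
end
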